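/- The pentagon graph of the dodecahedron graph is isomorphic to the icosahedron graph. -/

import Mathlib

open SimpleGraph Filter

/-- The 5-cycle graph on `ZMod 5`. -/
def C5 : SimpleGraph (ZMod 5) where
  Adj i j := j = i + 1 ∨ i = j + 1
  symm := ⟨fun i j h => by revert h; revert i j; decide⟩
  loopless := ⟨fun i h => by revert h; revert i; decide⟩

/-- A finset `s` is an induced pentagon (induced 5-cycle) of `G`. -/
def IsPentagon {V : Type*} (G : SimpleGraph V) (s : Finset V) : Prop :=
  s.card = 5 ∧ Nonempty (G.induce (s : Set V) ≃g C5)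

/-- The pentagon graph of `G`: vertices are the induced 5-cycles, adjacency is
sharing an edge. -/
def pentagonGraph {V : Type*} (G : SimpleGraph V) :
    SimpleGraph {s : Finset V // IsPentagon G s} where
  Adj p q := p ≠ q ∧ ∃ a b, G.Adj a b ∧ a ∈ p.1 ∧ b ∈ p.1 ∧ a ∈ q.1 ∧ b ∈ q.1
  symm := ⟨by
    rintro p q ⟨h, a, b, hab, h1, h2, h3, h4⟩
    exact ⟨h.symm, a, b, hab, h3, h4, h1, h2⟩⟩
  loopless := ⟨by rintro p ⟨h, -⟩; exact h rfl⟩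
/-- Edge list of the icosahedron graph (skeleton of the regular icosahedron). -/
def icoEdges : List (Fin 12 × Fin 12) :=
  [(0,1),(0,2),(0,3),(0,4),(0,5),(1,2),(2,3),(3,4),(4,5),(5,1),
   (1,6),(1,7),(2,7),(2,8),(3,8),(3,9),(4,9),(4,10),(5,10),(5,6),
   (6,7),(7,8),(8,9),(9,10),(10,6),(11,6),(11,7),(11,8),(11,9),(11,10)]

/-- The icosahedron graph: the 5-regular graph on 12 vertices given by the
skeleton of the regular icosahedron. -/
def icosahedron : SimpleGraph (Fin 12) where
  Adj a b := (a, b) ∈ icoEdges ∨ (b, a) ∈ icoEdges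
  symm := ⟨fun a b h => by revert h; revert a b; decide⟩
  loopless := ⟨fun a h => by revert h; revert a; decide⟩

instance : DecidableRel icosahedron.Adj :=
  fun a b => inferInstanceAs (Decidable ((a, b) ∈ icoEdges ∨ (b, a) ∈ icoEdges))

/-- Edge list of the dodecahedron graph (skeleton of the regular dodecahedron). -/
def dodEdges : List (Fin 20 × Fin 20) :=
  [(0,1),(1,2),(2,3),(3,4),(4,0),
   (0,5),(1,6),(2,7),(3,8),(4,9),
   (5,10),(6,11),(7,12),(8,13),(9,14),
   (10,6),(11,7),(12,8),(13,9),(14,5),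
   (10,15),(11,16),(12,17),(13,18),(14,19),
   (15,16),(16,17),(17,18),(18,19),(19,15)]

/-- The dodecahedron graph: the 3-regular graph on 20 vertices given by the
skeleton of the regular dodecahedron. -/
def dodecahedron : SimpleGraph (Fin 20) where
  Adj a b := (a, b) ∈ dodEdges ∨ (b, a) ∈ dodEdges
  symm := ⟨fun a b h => by revert h; revert a b; decide⟩
  loopless := ⟨fun a h => by revert h; revert a; decide⟩

/-- The tadpole graph `T_{3,1}`: a triangle `0,1,2` with a pendant vertex `3`
attached to `0`. -/
def tadpole : SimpleGraph (Fin 4) where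
  Adj a b := (a, b) ∈ [((0:Fin 4),(1:Fin 4)),(0,2),(1,2),(0,3)] ∨
             (b, a) ∈ [((0:Fin 4),(1:Fin 4)),(0,2),(1,2),(0,3)]
  symm := ⟨fun a b h => by revert h; revert a b; decide⟩
  loopless := ⟨fun a h => by revert h; revert a; decide⟩



/-! ### Auxiliary machinery for the proof -/

instance : DecidableRel dodecahedron.Adj :=
  fun a b => inferInstanceAs (Decidable ((a, b) ∈ dodEdges ∨ (b, a) ∈ dodEdges))

instance : DecidableRel C5.Adj :=
  fun i j => inferInstanceAs (Decidable (j = i + 1 ∨ i = j + 1))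

/-- Codes `a*20+b` of the edges of the dodecahedron. -/
def dodCodes : List Nat :=
  [1, 22, 43, 64, 80, 5, 26, 47, 68, 89, 110, 131, 152, 173, 194, 206, 227, 248,
   269, 285, 215, 236, 257, 278, 299, 316, 337, 358, 379, 395]

/-- Fast boolean adjacency test for the dodecahedron. -/
def adjB (a b : Nat) : Bool := (a*20+b) ∈ dodCodes || (b*20+a) ∈ dodCodes

/-- Neighbour table of the dodecahedron. -/
def nbr : Fin 20 → Fin 3 → Fin 20 :=
  ![![1,4,5], ![0,2,6], ![1,3,7], ![2,4,8], ![3,0,9], ![0,10,14], ![1,11,10],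
    ![2,12,11], ![3,13,12], ![4,14,13], ![5,6,15], ![6,7,16], ![7,8,17],
    ![8,9,18], ![9,5,19], ![10,16,19], ![11,15,17], ![12,16,18], ![13,17,19],
    ![14,18,15]]

lemma adj_iff : ∀ a b : Fin 20, dodecahedron.Adj a b ↔ adjB a.val b.val = true := by
  decide

lemma nbr_complete : ∀ a b : Fin 20, adjB a.val b.val → ∃ d : Fin 3, nbr a d = b := by
  decide

/-- The twelve faces of the dodecahedron, as vertex 5-tuples in cyclic order,
indexed to match the icosahedron labelling. -/
def faceFun : Fin 12 → ZMod 5 → Fin 20 := fun k i =>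
  (![![0,1,2,3,4], ![0,1,6,10,5], ![1,2,7,11,6], ![2,3,8,12,7], ![3,4,9,13,8],
     ![4,0,5,14,9], ![19,15,10,5,14], ![15,16,11,6,10], ![16,17,12,7,11],
     ![17,18,13,8,12], ![18,19,14,9,13], ![15,16,17,18,19]] : Fin 12 → Fin 5 → Fin 20)
    k ⟨i.val, i.val_lt⟩

/-- The faces as finsets. -/
def F : Fin 12 → Finset (Fin 20) :=
  ![{0,1,2,3,4}, {0,1,6,10,5}, {1,2,7,11,6}, {2,3,8,12,7}, {3,4,9,13,8},
    {4,0,5,14,9}, {19,15,10,5,14}, {15,16,11,6,10}, {16,17,12,7,11},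
    {17,18,13,8,12}, {18,19,14,9,13}, {15,16,17,18,19}]

lemma F_eq (k : Fin 12) : F k = Finset.univ.image (faceFun k) := by
  fin_cases k <;> decide

lemma mk_pentagon {V : Type*} [DecidableEq V] (G : SimpleGraph V) (f : ZMod 5 → V)
    (hinj : Function.Injective f)
    (hadj : ∀ i j, G.Adj (f i) (f j) ↔ C5.Adj i j) :
    IsPentagon G (Finset.univ.image f) := by
  constructor
  · rw [Finset.card_image_of_injective _ hinj]
    simp
  · have hmem : ∀ i, f i ∈ (↑(Finset.univ.image f) : Set V) := fun i => by
      simp [Finset.mem_coe]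
    let g : ZMod 5 → ↥(↑(Finset.univ.image f) : Set V) := fun i => ⟨f i, hmem i⟩
    have hbij : Function.Bijective g := by
      constructor
      · intro i j h
        exact hinj (congrArg Subtype.val h)
      · rintro ⟨x, hx⟩
        simp only [Finset.coe_image, Finset.coe_univ, Set.image_univ,
          Set.mem_range] at hx
        obtain ⟨i, hi⟩ := hx
        exact ⟨i, Subtype.ext hi⟩
    refine ⟨(RelIso.mk (Equiv.ofBijective g hbij) ?_).symm⟩
    intro a b
    show (G.induce _).Adj (g a) (g b) ↔ C5.Adj a b
    rw [SimpleGraph.comap_adj]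
    exact hadj a b

lemma face_pentagon (k : Fin 12) : IsPentagon dodecahedron (F k) := by
  rw [F_eq]
  apply mk_pentagon dodecahedron (faceFun k)
  · fin_cases k <;> decide
  · fin_cases k <;> decide

set_option maxHeartbeats 8000000 in
lemma classify' : ∀ (a : Fin 20) (d1 d2 d3 d4 : Fin 3),
    adjB (nbr (nbr (nbr (nbr a d1) d2) d3) d4).val a.val →
    ∃ k : Fin 12,
      ({a, nbr a d1, nbr (nbr a d1) d2, nbr (nbr (nbr a d1) d2) d3,
        nbr (nbr (nbr (nbr a d1) d2) d3) d4} : Finset (Fin 20)) = F k := by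
  decide

lemma classify {s : Finset (Fin 20)} (h : IsPentagon dodecahedron s) :
    ∃ k : Fin 12, s = F k := by
  obtain ⟨-, ⟨φ⟩⟩ := h
  set ψ := φ.symm with hψ
  set f : ZMod 5 → Fin 20 := fun i => (ψ i : Fin 20) with hf
  have hD : ∀ i : ZMod 5, dodecahedron.Adj (f i) (f (i + 1)) := by
    intro i
    have h5 : C5.Adj i (i + 1) := Or.inl rfl
    exact ψ.map_rel_iff.mpr h5
  obtain ⟨d1, hd1⟩ := nbr_complete _ _ ((adj_iff _ _).mp (hD 0))
  obtain ⟨d2, hd2⟩ := nbr_complete _ _ ((adj_iff _ _).mp (hD 1))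
  obtain ⟨d3, hd3⟩ := nbr_complete _ _ ((adj_iff _ _).mp (hD 2))
  obtain ⟨d4, hd4⟩ := nbr_complete _ _ ((adj_iff _ _).mp (hD 3))
  have hclose : adjB (f 4).val (f 0).val := by
    have := (adj_iff _ _).mp (hD 4)
    rwa [show (4 + 1 : ZMod 5) = 0 by decide] at this
  have h01 : (0 + 1 : ZMod 5) = 1 := by decide
  have h12 : (1 + 1 : ZMod 5) = 2 := by decide
  have h23 : (2 + 1 : ZMod 5) = 3 := by decide
  have h34 : (3 + 1 : ZMod 5) = 4 := by decide
  rw [h01] at hd1; rw [h12] at hd2; rw [h23] at hd3; rw [h34] at hd4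
  have key := classify' (f 0) d1 d2 d3 d4
  rw [hd1, hd2, hd3, hd4] at key
  obtain ⟨k, hk⟩ := key hclose
  refine ⟨k, ?_⟩
  rw [← hk]
  ext x
  simp only [Finset.mem_insert, Finset.mem_singleton]
  constructor
  · intro hx
    have hx' : x ∈ (↑s : Set (Fin 20)) := hx
    have hex : ∃ i : ZMod 5, f i = x :=
      ⟨φ ⟨x, hx'⟩, congrArg Subtype.val (φ.symm_apply_apply ⟨x, hx'⟩)⟩
    obtain ⟨i, hi⟩ := hex
    have hcases : ∀ j : ZMod 5, j = 0 ∨ j = 1 ∨ j = 2 ∨ j = 3 ∨ j = 4 := by decide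
    rcases hcases i with rfl | rfl | rfl | rfl | rfl <;> simp [hi]
  · intro hx
    rcases hx with rfl | rfl | rfl | rfl | rfl <;> exact (ψ _).2

/-- The candidate vertex bijection. -/
def toFun : Fin 12 → {s : Finset (Fin 20) // IsPentagon dodecahedron s} :=
  fun k => ⟨F k, face_pentagon k⟩

lemma F_inj : ∀ i j : Fin 12, F i = F j → i = j := by decide

lemma toFun_bij : Function.Bijective toFun := by
  constructor
  · intro i j h
    exact F_inj i j (congrArg Subtype.val h)
  · rintro ⟨s, hs⟩
    obtain ⟨k, rfl⟩ := classify hs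
    exact ⟨k, rfl⟩

lemma adj_key : ∀ a b : Fin 12,
    (F a ≠ F b ∧ ∃ x ∈ F a ∩ F b, ∃ y ∈ F a ∩ F b, adjB x.val y.val) ↔
      icosahedron.Adj a b := by
  decide

lemma adj_key' (a b : Fin 12) :
    (F a ≠ F b ∧ ∃ x y, dodecahedron.Adj x y ∧ x ∈ F a ∧ y ∈ F a ∧ x ∈ F b ∧ y ∈ F b) ↔
      icosahedron.Adj a b := by
  rw [← adj_key a b]
  constructor
  · rintro ⟨hne, x, y, hxy, h1, h2, h3, h4⟩
    exact ⟨hne, x, Finset.mem_inter.mpr ⟨h1, h3⟩, y, Finset.mem_inter.mpr ⟨h2, h4⟩,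
      (adj_iff x y).mp hxy⟩
  · rintro ⟨hne, x, hx, y, hy, hxy⟩
    obtain ⟨hx1, hx2⟩ := Finset.mem_inter.mp hx
    obtain ⟨hy1, hy2⟩ := Finset.mem_inter.mp hy
    exact ⟨hne, x, y, (adj_iff x y).mpr hxy, hx1, hy1, hx2, hy2⟩

/-- The pentagon graph of the dodecahedron is isomorphic to the icosahedron. -/
theorem stmt_3 : Nonempty (pentagonGraph dodecahedron ≃g icosahedron) := by
  refine ⟨(RelIso.mk (Equiv.ofBijective toFun toFun_bij) ?_).symm⟩
  intro a b
  show (pentagonGraph dodecahedron).Adj (toFun a) (toFun b) ↔ icosahedron.Adj a b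
  rw [← adj_key' a b]
  unfold pentagonGraph
  simp only [ne_eq, Subtype.mk.injEq, toFun]
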